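/- Let X be a nonempty finite design space, let p and s be natural numbers with 0 < s and s < p, and let m : X → Matrix (Fin p) (Fin p) ℝ assign to each design point a symmetric positive semidefinite matrix. Let A : Matrix (Fin p) (Fin s) ℝ be the matrix whose transpose is the block matrix (I_s 0). For a design w with M(w) positive definite, write the block decomposition M(w) = fromBlocks M₁₁(w) M₁₂(w) M₁₂(w)ᵀ M₂₂(w) with M₁₁(w) of size s×s. Suppose w* is a design with M(w*) positive definite. Then w* maximizes the D_s-criterion w ↦ log det(M₁₁(w) - M₁₂(w) * M₂₂(w)⁻¹ * M₁₂(w)ᵀ) over all designs with positive definite information matrix if and only if for every x ∈ X, trace(M(w*)⁻¹ * A * (Aᵀ * M(w*)⁻¹ * A)⁻¹ * Aᵀ * M(w*)⁻¹ * m(x)) ≤ s. -/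

import Mathlib

set_option linter.unusedSectionVars false
set_option maxHeartbeats 1600000

open Matrix BigOperators

namespace KW

variable {j k : Type*} [Fintype j] [Fintype k] [DecidableEq j] [DecidableEq k]


variable {k : Type*} [Fintype k] [DecidableEq k]

lemma posDef_smul {c : ℝ} (hc : 0 < c) {M : Matrix k k ℝ} (hM : M.PosDef) : (c • M).PosDef := by
  refine Matrix.PosDef.of_dotProduct_mulVec_pos ?_ (fun x hx => ?_)
  · unfold Matrix.IsHermitian
    rw [conjTranspose_smul, hM.1.eq]; simp
  · rw [smul_mulVec, dotProduct_smul]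
    exact mul_pos hc (hM.dotProduct_mulVec_pos hx)

lemma posSemidef_smul {c : ℝ} (hc : 0 ≤ c) {M : Matrix k k ℝ} (hM : M.PosSemidef) :
    (c • M).PosSemidef := by
  refine Matrix.PosSemidef.of_dotProduct_mulVec_nonneg ?_ (fun x => ?_)
  · unfold Matrix.IsHermitian
    rw [conjTranspose_smul, hM.1.eq]; simp
  · rw [smul_mulVec, dotProduct_smul]
    exact mul_nonneg hc (hM.dotProduct_mulVec_nonneg x)

lemma trace_eq_sum_eigenvalues {A : Matrix k k ℝ} (hA : A.IsHermitian) :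
    A.trace = ∑ i, hA.eigenvalues i := by
  conv_lhs => rw [hA.spectral_theorem, Unitary.conjStarAlgAut_apply]
  rw [Matrix.trace_mul_cycle]
  have h1 : (star (hA.eigenvectorUnitary : Matrix k k ℝ)) *
      (hA.eigenvectorUnitary : Matrix k k ℝ) = 1 :=
    (Matrix.mem_unitaryGroup_iff').mp (hA.eigenvectorUnitary).2
  rw [h1, Matrix.one_mul, Matrix.trace_diagonal]
  simp

lemma det_one_add_psd {P : Matrix k k ℝ} (hP : P.PosSemidef) : 1 ≤ (1 + P).det := by
  have hH := hP.1
  have hU : (hH.eigenvectorUnitary : Matrix k k ℝ) * (star (hH.eigenvectorUnitary : Matrix k k ℝ)) = 1 :=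
    (Matrix.mem_unitaryGroup_iff).mp (hH.eigenvectorUnitary).2
  have h1 : (1 : Matrix k k ℝ) + P =
      (hH.eigenvectorUnitary : Matrix k k ℝ) *
        (1 + diagonal (RCLike.ofReal ∘ hH.eigenvalues)) *
        (star (hH.eigenvectorUnitary : Matrix k k ℝ)) := by
    rw [Matrix.mul_add, Matrix.add_mul, Matrix.mul_one, hU, ← Unitary.conjStarAlgAut_apply (S := ℝ), ← hH.spectral_theorem]
  have hdet1 : ((hH.eigenvectorUnitary : Matrix k k ℝ)).det *
      ((star (hH.eigenvectorUnitary : Matrix k k ℝ)) : Matrix k k ℝ).det = 1 := by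
    rw [← Matrix.det_mul, hU, Matrix.det_one]
  have h2 : (1 : Matrix k k ℝ) + diagonal (RCLike.ofReal ∘ hH.eigenvalues) =
      diagonal (fun i => 1 + hH.eigenvalues i) := by
    rw [← diagonal_one, diagonal_add]
    congr 1
  rw [h1, Matrix.det_mul, Matrix.det_mul,
    show ∀ a b c : ℝ, a * b * c = b * (a * c) from fun a b c => by ring, hdet1, mul_one,
    h2, det_diagonal]
  calc (1:ℝ) = ∏ _i : k, 1 := by simp
  _ ≤ _ := Finset.prod_le_prod (by simp) (by
      intro i _
      have := hP.eigenvalues_nonneg i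
      linarith)

open scoped MatrixOrder in
lemma psd_sqrt_exists {A : Matrix k k ℝ} (hA : A.PosSemidef) :
    ∃ R : Matrix k k ℝ, R.PosSemidef ∧ R * R = A :=
  ⟨CFC.sqrt A, (CFC.sqrt_nonneg A).posSemidef, CFC.sqrt_mul_sqrt_self A hA.nonneg⟩

lemma det_mono {A B : Matrix k k ℝ} (hA : A.PosDef) (hBA : (B - A).PosSemidef) :
    A.det ≤ B.det := by
  obtain ⟨R, hRps, hRR⟩ := psd_sqrt_exists hA.posSemidef
  have hdetA : 0 < A.det := hA.det_pos
  have h2 : 0 ≤ R.det := by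
    rw [hRps.1.det_eq_prod_eigenvalues]
    exact Finset.prod_nonneg fun i _ => hRps.eigenvalues_nonneg i
  have hdetR : 0 < R.det := by
    have h1 : R.det * R.det = A.det := by rw [← Matrix.det_mul, hRR]
    nlinarith
  have hRunit : IsUnit R.det := hdetR.ne'.isUnit
  have hRH : R.IsHermitian := hRps.1
  have hRinvH : R⁻¹.IsHermitian := hRH.inv
  -- C = R⁻¹ B R⁻¹ = 1 + R⁻¹ (B - A) R⁻¹
  have key : R⁻¹ * B * R⁻¹ = 1 + R⁻¹ * (B - A) * R⁻¹ := by
    have h3 : R⁻¹ * A * R⁻¹ = 1 := by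
      rw [← hRR, Matrix.nonsing_inv_mul_cancel_left _ _ hRunit, Matrix.mul_nonsing_inv _ hRunit]
    rw [Matrix.mul_sub, Matrix.sub_mul, h3]
    abel
  have hpsd : (R⁻¹ * (B - A) * R⁻¹).PosSemidef := by
    have := hBA.mul_mul_conjTranspose_same R⁻¹
    rwa [hRinvH.eq] at this
  have hge : 1 ≤ (R⁻¹ * B * R⁻¹).det := by
    rw [key]; exact det_one_add_psd hpsd
  have hAd : A.det = R.det * R.det := by rw [← Matrix.det_mul, hRR]
  have hdet : (R⁻¹ * B * R⁻¹).det * A.det = B.det := by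
    rw [Matrix.det_mul, Matrix.det_mul, Matrix.det_nonsing_inv, Ring.inverse_eq_inv', hAd]
    field_simp
  nlinarith [hge, hdet, hdetA]



variable {j k : Type*} [Fintype j] [Fintype k] [DecidableEq j] [DecidableEq k]

lemma isSymm_of_hermitian' {M : Matrix k k ℝ} (h : M.IsHermitian) : Mᵀ = M := by
  simpa using congrArg Matrix.transpose h.symm

lemma hermitian_of_symm {M : Matrix k k ℝ} (h : Mᵀ = M) : M.IsHermitian := by
  show Mᴴ = M
  ext i j
  rw [conjTranspose_apply, star_trivial, show M j i = Mᵀ i j from rfl, h]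

lemma posDef_conj {N : Matrix k k ℝ} (hN : N.PosDef) (W : Matrix j k ℝ)
    (hW : ∀ v : j → ℝ, v ≠ 0 → Wᵀ *ᵥ v ≠ 0) : (W * N * Wᵀ).PosDef := by
  have hNs : Nᵀ = N := isSymm_of_hermitian' hN.1
  refine Matrix.PosDef.of_dotProduct_mulVec_pos (hermitian_of_symm ?_) (fun x hx => ?_)
  · rw [Matrix.transpose_mul, Matrix.transpose_mul, Matrix.transpose_transpose, hNs,
      Matrix.mul_assoc]
  · have h1 : star x ⬝ᵥ ((W * N * Wᵀ) *ᵥ x) = star (Wᵀ *ᵥ x) ⬝ᵥ (N *ᵥ (Wᵀ *ᵥ x)) := by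
      simp only [star_trivial, ← Matrix.mulVec_mulVec, Matrix.dotProduct_mulVec,
        ← Matrix.mulVec_transpose]
    rw [h1]
    exact hN.dotProduct_mulVec_pos (hW x hx)



variable {k : Type*} [Fintype k] [DecidableEq k]

lemma logdet_le {M N : Matrix k k ℝ} (hM : M.PosDef) (hN : N.PosDef) :
    Real.log N.det - Real.log M.det ≤ (M⁻¹ * N).trace - Fintype.card k := by
  obtain ⟨R, hRps, hRR⟩ := psd_sqrt_exists hM.posSemidef
  have hdetM : 0 < M.det := hM.det_pos
  have hRnn : 0 ≤ R.det := by
    rw [hRps.1.det_eq_prod_eigenvalues]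
    exact Finset.prod_nonneg fun i _ => hRps.eigenvalues_nonneg i
  have hdetR : 0 < R.det := by
    have h1 : R.det * R.det = M.det := by rw [← Matrix.det_mul, hRR]
    nlinarith
  have hRunit : IsUnit R.det := hdetR.ne'.isUnit
  have hRis : Rᵀ = R := isSymm_of_hermitian' hRps.1
  have hRinvs : (R⁻¹)ᵀ = R⁻¹ := by rw [Matrix.transpose_nonsing_inv, hRis]
  have hWinj : ∀ v : k → ℝ, v ≠ 0 → (R⁻¹)ᵀ *ᵥ v ≠ 0 := by
    intro v hv h0
    apply hv
    have : R *ᵥ ((R⁻¹)ᵀ *ᵥ v) = R *ᵥ 0 := by rw [h0]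
    rwa [hRinvs, Matrix.mulVec_mulVec, Matrix.mul_nonsing_inv _ hRunit, Matrix.one_mulVec,
      Matrix.mulVec_zero] at this
  have hC : (R⁻¹ * N * (R⁻¹)ᵀ).PosDef := posDef_conj hN R⁻¹ hWinj
  rw [hRinvs] at hC
  set C := R⁻¹ * N * R⁻¹ with hCdef
  have hCH : C.IsHermitian := hC.1
  -- determinant of C
  have hdetC : C.det = N.det / M.det := by
    rw [hCdef, Matrix.det_mul, Matrix.det_mul, Matrix.det_nonsing_inv, Ring.inverse_eq_inv',
      show M.det = R.det * R.det from by rw [← Matrix.det_mul, hRR]]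
    field_simp
  -- trace of C
  have htrC : C.trace = (M⁻¹ * N).trace := by
    rw [hCdef, Matrix.trace_mul_cycle, ← Matrix.mul_inv_rev, hRR]
  -- eigenvalue estimate
  have hdet' : C.det = ∏ i, hCH.eigenvalues i := by
    rw [hCH.det_eq_prod_eigenvalues]; norm_cast
  have hlog : Real.log C.det ≤ C.trace - Fintype.card k := by
    calc Real.log C.det = ∑ i, Real.log (hCH.eigenvalues i) := by
          rw [hdet']
          exact Real.log_prod (fun i _ => (hC.eigenvalues_pos i).ne')
    _ ≤ ∑ i, (hCH.eigenvalues i - 1) :=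
          Finset.sum_le_sum (fun i _ => Real.log_le_sub_one_of_pos (hC.eigenvalues_pos i))
    _ = C.trace - Fintype.card k := by
          rw [Finset.sum_sub_distrib, trace_eq_sum_eigenvalues hCH]
          simp
  have hlogC : Real.log C.det = Real.log N.det - Real.log M.det := by
    rw [hdetC, Real.log_div hN.det_pos.ne' hM.det_pos.ne']
  rw [← hlogC, ← htrC]
  exact hlog


variable {a b : Type*} [Fintype a] [Fintype b] [DecidableEq a] [DecidableEq b]

noncomputable def schur (N : Matrix (a ⊕ b) (a ⊕ b) ℝ) : Matrix a a ℝ :=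
  N.toBlocks₁₁ - N.toBlocks₁₂ * N.toBlocks₂₂⁻¹ * (N.toBlocks₁₂)ᵀ


variable {a b : Type*} [Fintype a] [Fintype b] [DecidableEq a] [DecidableEq b]

/-- The Schur complement of the lower-right block. -/
lemma toBlocks22_posDef {N : Matrix (a ⊕ b) (a ⊕ b) ℝ} (hN : N.PosDef) :
    N.toBlocks₂₂.PosDef := by
  have h : (Matrix.fromCols (0 : Matrix b a ℝ) (1 : Matrix b b ℝ)) * N * (Matrix.fromCols (0 : Matrix b a ℝ) (1 : Matrix b b ℝ))ᵀ
      = N.toBlocks₂₂ := by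
    conv_lhs => rw [← fromBlocks_toBlocks N]
    rw [fromCols_mul_fromBlocks, transpose_fromCols, transpose_zero, transpose_one,
      fromCols_mul_fromRows]
    simp
  rw [← h]
  refine posDef_conj hN _ (fun v hv h0 => hv ?_)
  rw [transpose_fromCols, transpose_zero, transpose_one] at h0
  rw [fromRows_mulVec] at h0
  have := congrFun h0
  funext i
  simpa using this (Sum.inr i)

lemma conj_eval (N : Matrix (a ⊕ b) (a ⊕ b) ℝ) (Z : Matrix a b ℝ) :
    (Matrix.fromCols (1 : Matrix a a ℝ) Z) * N * (Matrix.fromCols (1 : Matrix a a ℝ) Z)ᵀ =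
      N.toBlocks₁₁ + Z * N.toBlocks₂₁ + N.toBlocks₁₂ * Zᵀ + Z * N.toBlocks₂₂ * Zᵀ := by
  conv_lhs => rw [← fromBlocks_toBlocks N]
  rw [fromCols_mul_fromBlocks, transpose_fromCols, transpose_one,
    fromCols_mul_fromRows]
  simp only [Matrix.one_mul, Matrix.mul_one, Matrix.add_mul, Matrix.mul_assoc]
  abel

lemma conj_posDef {N : Matrix (a ⊕ b) (a ⊕ b) ℝ} (hN : N.PosDef) (Z : Matrix a b ℝ) :
    ((Matrix.fromCols (1 : Matrix a a ℝ) Z) * N * (Matrix.fromCols (1 : Matrix a a ℝ) Z)ᵀ).PosDef := by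
  refine posDef_conj hN _ (fun v hv h0 => hv ?_)
  rw [transpose_fromCols, transpose_one, fromRows_mulVec] at h0
  have := congrFun h0
  funext i
  simpa using this (Sum.inl i)



variable {a b : Type*} [Fintype a] [Fintype b] [DecidableEq a] [DecidableEq b]

lemma toBlocks21_eq {N : Matrix (a ⊕ b) (a ⊕ b) ℝ} (hNs : Nᵀ = N) :
    N.toBlocks₂₁ = (N.toBlocks₁₂)ᵀ := by
  ext i j
  exact (congrFun (congrFun hNs (Sum.inr i)) (Sum.inl j)).symm

lemma toBlocks22_symm {N : Matrix (a ⊕ b) (a ⊕ b) ℝ} (hNs : Nᵀ = N) :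
    (N.toBlocks₂₂)ᵀ = N.toBlocks₂₂ := by
  ext i j
  exact congrFun (congrFun hNs (Sum.inr i)) (Sum.inr j)

lemma schur_eq_conj {N : Matrix (a ⊕ b) (a ⊕ b) ℝ} (hNs : Nᵀ = N)
    (hD : IsUnit N.toBlocks₂₂.det) :
    (Matrix.fromCols (1 : Matrix a a ℝ) (-(N.toBlocks₁₂ * N.toBlocks₂₂⁻¹))) * N *
      (Matrix.fromCols (1 : Matrix a a ℝ) (-(N.toBlocks₁₂ * N.toBlocks₂₂⁻¹)))ᵀ = schur N := by
  set B := N.toBlocks₁₂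
  set D := N.toBlocks₂₂ with hDdef
  have hDs : Dᵀ = D := toBlocks22_symm hNs
  have hDinvs : (D⁻¹)ᵀ = D⁻¹ := by rw [Matrix.transpose_nonsing_inv, hDs]
  rw [conj_eval, toBlocks21_eq hNs]
  have h1 : (-(B * D⁻¹))ᵀ = -(D⁻¹ * Bᵀ) := by
    rw [transpose_neg, transpose_mul, hDinvs]
  rw [h1]
  have h2 : -(B * D⁻¹) * D * -(D⁻¹ * Bᵀ) = B * D⁻¹ * Bᵀ := by
    rw [Matrix.neg_mul, Matrix.neg_mul, Matrix.mul_neg, neg_neg,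
      Matrix.nonsing_inv_mul_cancel_right _ _ hD, ← Matrix.mul_assoc]
  have h3 : B * -(D⁻¹ * Bᵀ) = -(B * D⁻¹ * Bᵀ) := by
    rw [Matrix.mul_neg, Matrix.mul_assoc]
  have h4 : -(B * D⁻¹) * Bᵀ = -(B * D⁻¹ * Bᵀ) := by
    rw [Matrix.neg_mul]
  rw [h2, h3, h4, schur]
  abel

lemma conj_sub_schur {N : Matrix (a ⊕ b) (a ⊕ b) ℝ} (hNs : Nᵀ = N)
    (hD : IsUnit N.toBlocks₂₂.det) (Z : Matrix a b ℝ) :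
    (Matrix.fromCols (1 : Matrix a a ℝ) (-Z)) * N * (Matrix.fromCols (1 : Matrix a a ℝ) (-Z))ᵀ - schur N =
      (Z - N.toBlocks₁₂ * N.toBlocks₂₂⁻¹) * N.toBlocks₂₂ *
        (Z - N.toBlocks₁₂ * N.toBlocks₂₂⁻¹)ᵀ := by
  set B := N.toBlocks₁₂
  set D := N.toBlocks₂₂ with hDdef
  have hDs : Dᵀ = D := toBlocks22_symm hNs
  have hDinvs : (D⁻¹)ᵀ = D⁻¹ := by rw [Matrix.transpose_nonsing_inv, hDs]
  set W := B * D⁻¹ with hWdef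
  have hWt : Wᵀ = D⁻¹ * Bᵀ := by rw [hWdef, transpose_mul, hDinvs]
  have hWD : W * D = B := Matrix.nonsing_inv_mul_cancel_right _ _ hD
  have hDWt : D * Wᵀ = Bᵀ := by rw [hWt, Matrix.mul_nonsing_inv_cancel_left _ _ hD]
  have hrhs : (Z - W) * D * (Z - W)ᵀ =
      Z * D * Zᵀ - Z * Bᵀ - B * Zᵀ + B * D⁻¹ * Bᵀ := by
    rw [transpose_sub, Matrix.sub_mul, hWD, Matrix.mul_sub,
      Matrix.sub_mul, Matrix.sub_mul]
    have e1 : Z * D * Wᵀ = Z * Bᵀ := by rw [Matrix.mul_assoc, hDWt]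
    have e2 : B * Wᵀ = B * D⁻¹ * Bᵀ := by rw [hWt, ← Matrix.mul_assoc]
    rw [e1, e2]
    abel
  rw [hrhs, conj_eval, toBlocks21_eq hNs]
  have h1 : (-Z)ᵀ = -(Zᵀ) := transpose_neg Z
  rw [h1, schur]
  have h2 : -Z * D * -Zᵀ = Z * D * Zᵀ := by
    rw [Matrix.neg_mul, Matrix.neg_mul, Matrix.mul_neg, neg_neg]
  have h3 : B * -Zᵀ = -(B * Zᵀ) := Matrix.mul_neg _ _
  have h4 : -Z * Bᵀ = -(Z * Bᵀ) := Matrix.neg_mul _ _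
  rw [h2, h3, h4]
  abel



variable {a b : Type*} [Fintype a] [Fintype b] [DecidableEq a] [DecidableEq b]

lemma blockInv {M : Matrix (a ⊕ b) (a ⊕ b) ℝ} (hMs : Mᵀ = M)
    (hD : IsUnit M.toBlocks₂₂.det) (hS : IsUnit (schur M).det) :
    M⁻¹ = fromBlocks (schur M)⁻¹
      (-((schur M)⁻¹ * M.toBlocks₁₂ * M.toBlocks₂₂⁻¹))
      (-(M.toBlocks₂₂⁻¹ * (M.toBlocks₁₂)ᵀ * (schur M)⁻¹))
      (M.toBlocks₂₂⁻¹ + M.toBlocks₂₂⁻¹ * (M.toBlocks₁₂)ᵀ * (schur M)⁻¹ *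
        M.toBlocks₁₂ * M.toBlocks₂₂⁻¹) := by
  set P := M.toBlocks₁₁ with hP
  set B := M.toBlocks₁₂ with hB
  set D := M.toBlocks₂₂ with hDdef
  set S := schur M with hSdef
  have hSP : S = P - B * D⁻¹ * Bᵀ := rfl
  apply Matrix.inv_eq_right_inv
  conv_lhs => rw [← fromBlocks_toBlocks M, toBlocks21_eq hMs, ← hP, ← hB, ← hDdef]
  rw [fromBlocks_multiply]
  have h11 : P * S⁻¹ + B * -(D⁻¹ * Bᵀ * S⁻¹) = 1 := by
    rw [Matrix.mul_neg, ← Matrix.mul_assoc, ← Matrix.mul_assoc, ← sub_eq_add_neg,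
      ← Matrix.sub_mul, ← hSP, Matrix.mul_nonsing_inv _ hS]
  have h12 : P * -(S⁻¹ * B * D⁻¹) + B * (D⁻¹ + D⁻¹ * Bᵀ * S⁻¹ * B * D⁻¹) = 0 := by
    rw [Matrix.mul_neg, Matrix.mul_add]
    have e1 : B * (D⁻¹ * Bᵀ * S⁻¹ * B * D⁻¹) = B * D⁻¹ * Bᵀ * S⁻¹ * B * D⁻¹ := by
      simp only [Matrix.mul_assoc]
    have e2 : P * (S⁻¹ * B * D⁻¹) = P * S⁻¹ * B * D⁻¹ := by
      simp only [Matrix.mul_assoc]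
    rw [e1, e2]
    have e3 : P * S⁻¹ * B * D⁻¹ - B * D⁻¹ * Bᵀ * S⁻¹ * B * D⁻¹ = B * D⁻¹ := by
      rw [show P * S⁻¹ * B * D⁻¹ - B * D⁻¹ * Bᵀ * S⁻¹ * B * D⁻¹ =
        ((P - B * D⁻¹ * Bᵀ) * S⁻¹) * B * D⁻¹ from by
          rw [Matrix.sub_mul, Matrix.sub_mul, Matrix.sub_mul], ← hSP,
        Matrix.mul_nonsing_inv _ hS, Matrix.one_mul]
    have e4 : -(P * S⁻¹ * B * D⁻¹) + (B * D⁻¹ + B * D⁻¹ * Bᵀ * S⁻¹ * B * D⁻¹) =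
        -(P * S⁻¹ * B * D⁻¹ - B * D⁻¹ * Bᵀ * S⁻¹ * B * D⁻¹) + B * D⁻¹ := by abel
    rw [e4, e3]
    abel
  have h21 : Bᵀ * S⁻¹ + D * -(D⁻¹ * Bᵀ * S⁻¹) = 0 := by
    simp only [Matrix.mul_neg, Matrix.mul_assoc]
    rw [Matrix.mul_nonsing_inv_cancel_left _ _ hD]
    abel
  have h22 : Bᵀ * -(S⁻¹ * B * D⁻¹) + D * (D⁻¹ + D⁻¹ * Bᵀ * S⁻¹ * B * D⁻¹) = 1 := by
    simp only [Matrix.mul_neg, Matrix.mul_add, Matrix.mul_assoc]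
    rw [Matrix.mul_nonsing_inv _ hD, Matrix.mul_nonsing_inv_cancel_left _ _ hD]
    abel
  rw [h11, h12, h21, h22, fromBlocks_one]



variable {a b : Type*} [Fintype a] [Fintype b] [DecidableEq a] [DecidableEq b]

lemma trace_fromBlocks' (A : Matrix a a ℝ) (B : Matrix a b ℝ) (C : Matrix b a ℝ)
    (D : Matrix b b ℝ) : (fromBlocks A B C D).trace = A.trace + D.trace := by
  simp [Matrix.trace, Fintype.sum_sum_type]

lemma trace_E_mul (D' : Matrix b b ℝ) (N : Matrix (a ⊕ b) (a ⊕ b) ℝ) :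
    ((fromBlocks 0 0 0 D' : Matrix (a ⊕ b) (a ⊕ b) ℝ) * N).trace
      = (D' * N.toBlocks₂₂).trace := by
  conv_lhs => rw [← fromBlocks_toBlocks N]
  rw [fromBlocks_multiply]
  simp [trace_fromBlocks']

lemma key_identity {M : Matrix (a ⊕ b) (a ⊕ b) ℝ} (hMs : Mᵀ = M)
    (hD : IsUnit M.toBlocks₂₂.det) (hS : IsUnit (schur M).det) :
    M⁻¹ * (fromRows (1 : Matrix a a ℝ) 0 : Matrix (a ⊕ b) a ℝ) *
      ((Matrix.fromCols (1 : Matrix a a ℝ) 0 : Matrix a (a ⊕ b) ℝ) * M⁻¹ * fromRows (1 : Matrix a a ℝ) (0 : Matrix b a ℝ))⁻¹ *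
      (Matrix.fromCols (1 : Matrix a a ℝ) 0 : Matrix a (a ⊕ b) ℝ) * M⁻¹ =
      M⁻¹ - fromBlocks 0 0 0 M.toBlocks₂₂⁻¹ := by
  set B := M.toBlocks₁₂ with hB
  set D := M.toBlocks₂₂ with hDdef
  set S := schur M with hSdef
  set K12 := -(S⁻¹ * B * D⁻¹) with hK12
  set K21 := -(D⁻¹ * Bᵀ * S⁻¹) with hK21
  set K22 := D⁻¹ + D⁻¹ * Bᵀ * S⁻¹ * B * D⁻¹ with hK22
  have hMinv : M⁻¹ = fromBlocks S⁻¹ K12 K21 K22 := blockInv hMs hD hS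
  rw [hMinv]
  have h1 : (Matrix.fromCols (1 : Matrix a a ℝ) 0 : Matrix a (a ⊕ b) ℝ) * fromBlocks S⁻¹ K12 K21 K22 =
      Matrix.fromCols S⁻¹ K12 := by
    rw [fromCols_mul_fromBlocks]
    simp
  have h2 : (Matrix.fromCols S⁻¹ K12) * (fromRows (1 : Matrix a a ℝ) 0 : Matrix (a ⊕ b) a ℝ) = S⁻¹ := by
    rw [fromCols_mul_fromRows]
    simp
  rw [h1, h2, Matrix.nonsing_inv_nonsing_inv _ hS]
  have h3 : fromBlocks S⁻¹ K12 K21 K22 * (fromRows (1 : Matrix a a ℝ) 0 : Matrix (a ⊕ b) a ℝ) =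
      fromRows S⁻¹ K21 := by
    rw [fromBlocks_mul_fromRows]
    simp
  rw [h3]
  have h4 : (fromRows S⁻¹ K21 : Matrix (a ⊕ b) a ℝ) * S = fromRows 1 (-(D⁻¹ * Bᵀ)) := by
    rw [fromRows_mul, Matrix.nonsing_inv_mul _ hS, hK21, Matrix.neg_mul,
      Matrix.nonsing_inv_mul_cancel_right _ _ hS]
  rw [h4]
  have h5 : (fromRows 1 (-(D⁻¹ * Bᵀ)) : Matrix (a ⊕ b) a ℝ) *
      (Matrix.fromCols (1 : Matrix a a ℝ) 0 : Matrix a (a ⊕ b) ℝ) = fromBlocks 1 0 (-(D⁻¹ * Bᵀ)) 0 := by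
    rw [fromRows_mul_fromCols]
    simp
  rw [h5, fromBlocks_multiply]
  have e21 : -(D⁻¹ * Bᵀ) * S⁻¹ + (0 : Matrix b b ℝ) * K21 = K21 := by
    rw [Matrix.zero_mul, add_zero, hK21, Matrix.neg_mul]
  have e22 : -(D⁻¹ * Bᵀ) * K12 + (0 : Matrix b b ℝ) * K22 = K22 - D⁻¹ := by
    rw [Matrix.zero_mul, add_zero, hK12, hK22, Matrix.neg_mul, Matrix.mul_neg, neg_neg]
    simp only [Matrix.mul_assoc]
    abel
  rw [e21, e22]
  have efin : fromBlocks S⁻¹ K12 K21 K22 - (fromBlocks 0 0 0 D⁻¹ : Matrix (a ⊕ b) (a ⊕ b) ℝ)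
      = fromBlocks S⁻¹ K12 K21 (K22 - D⁻¹) := by
    ext (i | i) (j | j) <;> simp [fromBlocks]
  rw [efin]
  simp


variable {a b : Type*} [Fintype a] [Fintype b] [DecidableEq a] [DecidableEq b]

lemma conjT_eq_transpose {u v : Type*} (X : Matrix u v ℝ) : Xᴴ = Xᵀ := by
  ext i j
  simp [conjTranspose_apply]

lemma schur_posDef {N : Matrix (a ⊕ b) (a ⊕ b) ℝ} (hN : N.PosDef) : (schur N).PosDef := by
  have hNs : Nᵀ = N := isSymm_of_hermitian' hN.1
  have hD2 : N.toBlocks₂₂.PosDef := toBlocks22_posDef hN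
  rw [← schur_eq_conj hNs hD2.det_pos.ne'.isUnit]
  exact conj_posDef hN _

lemma TtST {M : Matrix (a ⊕ b) (a ⊕ b) ℝ} (hM : M.PosDef) :
    (Matrix.fromCols (1 : Matrix a a ℝ) (-(M.toBlocks₁₂ * M.toBlocks₂₂⁻¹)))ᵀ * (schur M)⁻¹ *
      (Matrix.fromCols (1 : Matrix a a ℝ) (-(M.toBlocks₁₂ * M.toBlocks₂₂⁻¹))) =
      M⁻¹ - fromBlocks 0 0 0 M.toBlocks₂₂⁻¹ := by
  have hMs : Mᵀ = M := isSymm_of_hermitian' hM.1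
  have hD2 : M.toBlocks₂₂.PosDef := toBlocks22_posDef hM
  have hD : IsUnit M.toBlocks₂₂.det := hD2.det_pos.ne'.isUnit
  have hS : IsUnit (schur M).det := (schur_posDef hM).det_pos.ne'.isUnit
  set B := M.toBlocks₁₂ with hB
  set D := M.toBlocks₂₂ with hDdef
  set S := schur M with hSdef
  have hDinvs : (D⁻¹)ᵀ = D⁻¹ := by
    rw [Matrix.transpose_nonsing_inv, toBlocks22_symm hMs]
  rw [transpose_fromCols, transpose_one, transpose_neg, transpose_mul, hDinvs,
    fromRows_mul, fromRows_mul_fromCols, blockInv hMs hD hS]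
  have e11 : (1 : Matrix a a ℝ) * S⁻¹ * (1 : Matrix a a ℝ) = S⁻¹ := by
    rw [Matrix.one_mul, Matrix.mul_one]
  have e12 : (1 : Matrix a a ℝ) * S⁻¹ * -(B * D⁻¹) = -(S⁻¹ * B * D⁻¹) := by
    rw [Matrix.one_mul, Matrix.mul_neg]
    simp only [Matrix.mul_assoc]
  have e21 : -(D⁻¹ * Bᵀ) * S⁻¹ * (1 : Matrix a a ℝ) = -(D⁻¹ * Bᵀ * S⁻¹) := by
    rw [Matrix.mul_one, Matrix.neg_mul]
  have e22 : -(D⁻¹ * Bᵀ) * S⁻¹ * -(B * D⁻¹) =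
      (D⁻¹ + D⁻¹ * Bᵀ * S⁻¹ * B * D⁻¹) - D⁻¹ := by
    rw [Matrix.neg_mul, Matrix.neg_mul, Matrix.mul_neg, neg_neg]
    simp only [Matrix.mul_assoc]
    abel
  rw [e11, e12, e21, e22]
  ext (i | i) (j | j) <;> simp [fromBlocks, S, B, D]

lemma core_ineq {M N : Matrix (a ⊕ b) (a ⊕ b) ℝ} (hM : M.PosDef) (hN : N.PosDef) :
    Real.log (schur N).det - Real.log (schur M).det ≤
      (((M⁻¹ - fromBlocks 0 0 0 M.toBlocks₂₂⁻¹) * N)).trace - Fintype.card a := by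
  have hMs : Mᵀ = M := isSymm_of_hermitian' hM.1
  have hNs : Nᵀ = N := isSymm_of_hermitian' hN.1
  have hDM : IsUnit M.toBlocks₂₂.det := (toBlocks22_posDef hM).det_pos.ne'.isUnit
  have hDN2 : N.toBlocks₂₂.PosDef := toBlocks22_posDef hN
  have hDN : IsUnit N.toBlocks₂₂.det := hDN2.det_pos.ne'.isUnit
  set Z := M.toBlocks₁₂ * M.toBlocks₂₂⁻¹ with hZ
  set T : Matrix a (a ⊕ b) ℝ := Matrix.fromCols (1 : Matrix a a ℝ) (-Z) with hT
  have hTM : T * M * Tᵀ = schur M := schur_eq_conj hMs hDM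
  have hTN : (T * N * Tᵀ).PosDef := conj_posDef hN (-Z)
  have hpsd : (T * N * Tᵀ - schur N).PosSemidef := by
    rw [conj_sub_schur hNs hDN Z]
    have h := hDN2.posSemidef.mul_mul_conjTranspose_same
      (Z - N.toBlocks₁₂ * N.toBlocks₂₂⁻¹)
    rwa [conjT_eq_transpose] at h
  have hdet1 : (schur N).det ≤ (T * N * Tᵀ).det := det_mono (schur_posDef hN) hpsd
  have hlog1 : Real.log (schur N).det ≤ Real.log (T * N * Tᵀ).det :=
    Real.log_le_log (schur_posDef hN).det_pos hdet1
  have hlog2 : Real.log (T * N * Tᵀ).det - Real.log (schur M).det ≤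
      ((schur M)⁻¹ * (T * N * Tᵀ)).trace - Fintype.card a :=
    logdet_le (hTM ▸ conj_posDef hM (-Z)) hTN
  have htr : ((schur M)⁻¹ * (T * N * Tᵀ)).trace =
      ((M⁻¹ - fromBlocks 0 0 0 M.toBlocks₂₂⁻¹) * N).trace := by
    rw [show (schur M)⁻¹ * (T * N * Tᵀ) = ((schur M)⁻¹ * T * N) * Tᵀ from by
        simp only [Matrix.mul_assoc],
      Matrix.trace_mul_comm, show Tᵀ * ((schur M)⁻¹ * T * N) = (Tᵀ * (schur M)⁻¹ * T) * N
        from by simp only [Matrix.mul_assoc], TtST hM]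
  linarith [hlog1, hlog2, htr.le, htr.ge]



variable {a b : Type*} [Fintype a] [Fintype b] [DecidableEq a] [DecidableEq b]

lemma logdet_schur_split {N : Matrix (a ⊕ b) (a ⊕ b) ℝ} (hN : N.PosDef) :
    Real.log (schur N).det = Real.log N.det - Real.log N.toBlocks₂₂.det := by
  have hNs : Nᵀ = N := isSymm_of_hermitian' hN.1
  have hD2 : N.toBlocks₂₂.PosDef := toBlocks22_posDef hN
  haveI := Matrix.invertibleOfIsUnitDet _ hD2.det_pos.ne'.isUnit
  have hdet : N.det = N.toBlocks₂₂.det * (schur N).det := by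
    conv_lhs => rw [← fromBlocks_toBlocks N, toBlocks21_eq hNs]
    rw [Matrix.det_fromBlocks₂₂, Matrix.invOf_eq_nonsing_inv]
    rfl
  rw [hdet, Real.log_mul hD2.det_pos.ne' (schur_posDef hN).det_pos.ne']
  ring

lemma toBlocks22_add_smul (X Y : Matrix (a ⊕ b) (a ⊕ b) ℝ) (t : ℝ) :
    (X + t • Y).toBlocks₂₂ = X.toBlocks₂₂ + t • Y.toBlocks₂₂ := rfl

lemma trace_inv_continuous (M C : Matrix (a ⊕ b) (a ⊕ b) ℝ) (hdet : M.det ≠ 0) :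
    ContinuousAt (fun t : ℝ => (((M + t • C)⁻¹ * C)).trace) 0 := by
  have heq : (fun t : ℝ => (((M + t • C)⁻¹ * C)).trace) =
      fun t : ℝ => ((M + t • C).det)⁻¹ * ((M + t • C).adjugate * C).trace := by
    funext t
    rw [Matrix.inv_def, Matrix.smul_mul, Matrix.trace_smul, smul_eq_mul,
      Ring.inverse_eq_inv']
  rw [heq]
  have hcont : Continuous (fun t : ℝ => M + t • C) :=
    continuous_const.add (continuous_id.smul continuous_const)
  have hdetc : Continuous (fun t : ℝ => (M + t • C).det) := hcont.matrix_det
  have htrc : Continuous (fun t : ℝ => ((M + t • C).adjugate * C).trace) :=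
    ((hcont.matrix_adjugate).matrix_mul continuous_const).matrix_trace
  have h0 : (M + (0:ℝ) • C).det ≠ 0 := by simpa using hdet
  exact (hdetc.continuousAt.inv₀ h0).mul htrc.continuousAt

lemma forward_aux {M m0 : Matrix (a ⊕ b) (a ⊕ b) ℝ} (hM : M.PosDef) (hm0 : m0.PosSemidef)
    (hc : (Fintype.card a : ℝ) <
      (((M⁻¹ - fromBlocks 0 0 0 M.toBlocks₂₂⁻¹) * m0)).trace) :
    ∃ t : ℝ, 0 < t ∧ t < 1 ∧
      Real.log M.det - Real.log M.toBlocks₂₂.det <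
        Real.log ((1-t) • M + t • m0).det -
          Real.log (((1-t) • M + t • m0)).toBlocks₂₂.det := by
  set C := m0 - M with hC
  set D := M.toBlocks₂₂ with hD
  have hD2 : D.PosDef := toBlocks22_posDef hM
  have hDunit : IsUnit D.det := hD2.det_pos.ne'.isUnit
  -- the continuous function
  set h : ℝ → ℝ := fun t => ((M + t • C)⁻¹ * C).trace - (D⁻¹ * C.toBlocks₂₂).trace with hh
  have hcont : ContinuousAt h 0 :=
    (trace_inv_continuous M C hM.det_pos.ne').sub continuousAt_const
  -- h 0 > 0
  have htrM : ((M⁻¹ - fromBlocks 0 0 0 D⁻¹) * M).trace = (Fintype.card a : ℝ) := by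
    rw [Matrix.sub_mul, Matrix.trace_sub, Matrix.nonsing_inv_mul _ hM.det_pos.ne'.isUnit,
      Matrix.trace_one, trace_E_mul, Matrix.nonsing_inv_mul _ hDunit, Matrix.trace_one]
    simp [Fintype.card_sum]
  have hsplit : ∀ X : Matrix (a ⊕ b) (a ⊕ b) ℝ,
      ((M⁻¹ - fromBlocks 0 0 0 D⁻¹) * X).trace
        = (M⁻¹ * X).trace - (D⁻¹ * X.toBlocks₂₂).trace := by
    intro X
    rw [Matrix.sub_mul, Matrix.trace_sub, trace_E_mul]
  have h0pos : 0 < h 0 := by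
    have e : h 0 = ((M⁻¹ - fromBlocks 0 0 0 D⁻¹) * C).trace := by
      rw [hh]
      simp only [zero_smul, add_zero]
      rw [hsplit C]
    have e2 : ((M⁻¹ - fromBlocks 0 0 0 D⁻¹) * C).trace =
        ((M⁻¹ - fromBlocks 0 0 0 D⁻¹) * m0).trace - ((M⁻¹ - fromBlocks 0 0 0 D⁻¹) * M).trace := by
      rw [hC, Matrix.mul_sub, Matrix.trace_sub]
    rw [e, e2, htrM]
    linarith
  have hev : ∀ᶠ t in nhds (0:ℝ), 0 < h t := hcont.eventually (eventually_gt_nhds h0pos)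
  rw [Metric.eventually_nhds_iff] at hev
  obtain ⟨ε, hε, hball⟩ := hev
  refine ⟨min (ε/2) (1/2), by positivity, ?_, ?_⟩
  · have : min (ε/2) (1/2 : ℝ) ≤ 1/2 := min_le_right _ _
    linarith
  set t := min (ε/2) (1/2 : ℝ) with htdef
  have ht0 : 0 < t := by positivity
  have ht1 : t < 1 := by
    have : t ≤ 1/2 := min_le_right _ _
    linarith
  have htpos : 0 < h t := by
    apply hball
    have h1 : t ≤ ε/2 := min_le_left _ _
    have : dist t 0 = |t| := by simp [Real.dist_eq]
    rw [this, abs_of_pos ht0]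
    linarith
  have hNt : (1-t) • M + t • m0 = M + t • C := by
    rw [hC, smul_sub, sub_smul, one_smul]
    abel
  rw [hNt]
  set Nt := M + t • C with hNtdef
  have hNtPD : Nt.PosDef := by
    rw [← hNt]
    exact (posDef_smul (by linarith : (0:ℝ) < 1 - t) hM).add_posSemidef
      (posSemidef_smul ht0.le hm0)
  have hNt22 : Nt.toBlocks₂₂.PosDef := toBlocks22_posDef hNtPD
  have hMeq : M = Nt - t • C := by rw [hNtdef]; abel
  have htr1 : (Nt⁻¹ * M).trace = (Fintype.card (a ⊕ b) : ℝ) - t * (Nt⁻¹ * C).trace := by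
    conv_lhs => rw [hMeq]
    rw [Matrix.mul_sub, Matrix.trace_sub, Matrix.nonsing_inv_mul _ hNtPD.det_pos.ne'.isUnit,
      Matrix.trace_one, Matrix.mul_smul, Matrix.trace_smul, smul_eq_mul]
  have key1 := logdet_le hNtPD hM
  rw [htr1] at key1
  have htr2 : (D⁻¹ * Nt.toBlocks₂₂).trace
      = (Fintype.card b : ℝ) + t * (D⁻¹ * C.toBlocks₂₂).trace := by
    rw [hNtdef, toBlocks22_add_smul, Matrix.mul_add, Matrix.trace_add, ← hD,
      Matrix.nonsing_inv_mul _ hDunit, Matrix.trace_one, Matrix.mul_smul, Matrix.trace_smul,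
      smul_eq_mul]
  have key2 := logdet_le hD2 hNt22
  rw [htr2] at key2
  have hth : 0 < t * h t := mul_pos ht0 htpos
  have hht : t * h t = t * (Nt⁻¹ * C).trace - t * (D⁻¹ * C.toBlocks₂₂).trace := by
    rw [hh]; ring
  rw [hht] at hth
  linarith [key1, key2, hth]


end KW

/-- Corollary 2: the Kiefer–Wolfowitz type equivalence theorem specialized to
`D_s`-optimality, i.e. `D_A`-optimality with `Aᵀ = (I_s 0)`; the `D_s`-criterion
is `log det` of the Schur complement of the lower-right block of `M(w)`. -/
theorem Ds_optimality_equivalence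
    {X : Type*} [Fintype X] [Nonempty X] (p s : ℕ) (hs : 0 < s) (hsp : s < p)
    (m : X → Matrix (Fin s ⊕ Fin (p - s)) (Fin s ⊕ Fin (p - s)) ℝ)
    (hm : ∀ x, (m x).PosSemidef)
    (A : Matrix (Fin s ⊕ Fin (p - s)) (Fin s) ℝ)
    (hA : Aᵀ = Matrix.fromCols (1 : Matrix (Fin s) (Fin s) ℝ)
      (0 : Matrix (Fin s) (Fin (p - s)) ℝ))
    (wstar : X → ℝ) (hw0 : ∀ x, 0 ≤ wstar x) (hw1 : ∑ x, wstar x = 1)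
    (hM : (∑ x, wstar x • m x).PosDef) :
    (∀ w : X → ℝ, (∀ x, 0 ≤ w x) → ∑ x, w x = 1 → (∑ x, w x • m x).PosDef →
        Real.log ((∑ x, w x • m x).toBlocks₁₁ -
            (∑ x, w x • m x).toBlocks₁₂ * (∑ x, w x • m x).toBlocks₂₂⁻¹ *
              ((∑ x, w x • m x).toBlocks₁₂)ᵀ).det ≤
          Real.log ((∑ x, wstar x • m x).toBlocks₁₁ -
            (∑ x, wstar x • m x).toBlocks₁₂ * (∑ x, wstar x • m x).toBlocks₂₂⁻¹ *
              ((∑ x, wstar x • m x).toBlocks₁₂)ᵀ).det) ↔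
      (∀ x : X,
        ((∑ y, wstar y • m y)⁻¹ * A * (Aᵀ * (∑ y, wstar y • m y)⁻¹ * A)⁻¹ * Aᵀ *
            (∑ y, wstar y • m y)⁻¹ * m x).trace ≤ (s : ℝ)) := by
  classical
  set M : Matrix (Fin s ⊕ Fin (p - s)) (Fin s ⊕ Fin (p - s)) ℝ := ∑ x, wstar x • m x with hMdef
  have hMpd : M.PosDef := hM
  have hMs : Mᵀ = M := KW.isSymm_of_hermitian' hMpd.1
  have hD2 : M.toBlocks₂₂.PosDef := KW.toBlocks22_posDef hMpd
  have hDu : IsUnit M.toBlocks₂₂.det := hD2.det_pos.ne'.isUnit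
  have hSu : IsUnit (KW.schur M).det := (KW.schur_posDef hMpd).det_pos.ne'.isUnit
  have hAe : A = fromRows 1 0 := by
    rw [← transpose_transpose A, hA, transpose_fromCols, transpose_one, transpose_zero]
  have hkey : M⁻¹ * A * (Aᵀ * M⁻¹ * A)⁻¹ * Aᵀ * M⁻¹
      = M⁻¹ - fromBlocks 0 0 0 M.toBlocks₂₂⁻¹ := by
    rw [hA, hAe]
    exact KW.key_identity hMs hDu hSu
  have hcard : ((Fintype.card (Fin s)) : ℝ) = (s : ℝ) := by simp
  have hsplit' : ∀ {N : Matrix (Fin s ⊕ Fin (p - s)) (Fin s ⊕ Fin (p - s)) ℝ},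
      N.PosDef → Real.log (N.toBlocks₁₁ -
          N.toBlocks₁₂ * N.toBlocks₂₂⁻¹ * (N.toBlocks₁₂)ᵀ).det
        = Real.log N.det - Real.log N.toBlocks₂₂.det :=
    fun h => KW.logdet_schur_split h
  constructor
  · -- optimality → trace condition
    intro hopt x
    rw [hkey]
    by_contra hgt
    push_neg at hgt
    have hc : ((Fintype.card (Fin s)) : ℝ) <
        (((M⁻¹ - fromBlocks 0 0 0 M.toBlocks₂₂⁻¹) * m x)).trace := by
      rw [hcard]; exact hgt
    obtain ⟨t, ht0, ht1, hlt⟩ := KW.forward_aux hMpd (hm x) hc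
    set w : X → ℝ := fun y => (1 - t) * wstar y + t * (if y = x then 1 else 0) with hwdef
    have hsum : ∑ y, w y • m y = (1 - t) • M + t • m x := by
      have e : ∀ y, w y • m y = (1 - t) • (wstar y • m y) +
          (if y = x then t • m y else 0) := by
        intro y
        by_cases hxy : y = x <;>
          simp [hwdef, hxy, add_smul, mul_smul]
      rw [Finset.sum_congr rfl (fun y _ => e y), Finset.sum_add_distrib,
        ← Finset.smul_sum, Finset.sum_ite_eq' Finset.univ x (fun y => t • m y)]
      simp [hMdef]
    have h0 : ∀ y, 0 ≤ w y := by
      intro y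
      have hy := hw0 y
      by_cases hxy : y = x
      · subst hxy
        have hwy : w y = (1 - t) * wstar y + t := by simp [hwdef]
        rw [hwy]
        nlinarith
      · simp only [hwdef, if_neg hxy, mul_zero, add_zero]
        nlinarith
    have h1 : ∑ y, w y = 1 := by
      rw [hwdef]
      rw [Finset.sum_add_distrib, ← Finset.mul_sum, hw1,
        ← Finset.mul_sum, Finset.sum_ite_eq' Finset.univ x (fun _ => (1:ℝ))]
      simp
    have hNpd : ((1 - t) • M + t • m x).PosDef :=
      (KW.posDef_smul (by linarith : (0:ℝ) < 1 - t) hMpd).add_posSemidef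
        (KW.posSemidef_smul ht0.le (hm x))
    have hPD : (∑ y, w y • m y).PosDef := by rw [hsum]; exact hNpd
    have hle := hopt w h0 h1 hPD
    rw [hsum] at hle
    rw [hsplit' hNpd, hsplit' hMpd] at hle
    linarith
  · -- trace condition → optimality
    intro hcond w hw0' hw1' hwPD
    have hcond' : ∀ x, (((M⁻¹ - fromBlocks 0 0 0 M.toBlocks₂₂⁻¹) * m x)).trace ≤ (s:ℝ) := by
      intro x
      have := hcond x
      rwa [hkey] at this
    set N : Matrix (Fin s ⊕ Fin (p - s)) (Fin s ⊕ Fin (p - s)) ℝ := ∑ x, w x • m x with hNdef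
    have core := KW.core_ineq hMpd hwPD
    have htr : (((M⁻¹ - fromBlocks 0 0 0 M.toBlocks₂₂⁻¹) * N)).trace
        = ∑ x, w x * (((M⁻¹ - fromBlocks 0 0 0 M.toBlocks₂₂⁻¹) * m x)).trace := by
      rw [hNdef, Matrix.mul_sum, Matrix.trace_sum]
      refine Finset.sum_congr rfl (fun x _ => ?_)
      rw [Matrix.mul_smul, Matrix.trace_smul, smul_eq_mul]
    have hbound : ∑ x, w x * (((M⁻¹ - fromBlocks 0 0 0 M.toBlocks₂₂⁻¹) * m x)).trace
        ≤ (s : ℝ) := by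
      calc ∑ x, w x * (((M⁻¹ - fromBlocks 0 0 0 M.toBlocks₂₂⁻¹) * m x)).trace
          ≤ ∑ x, w x * (s : ℝ) :=
            Finset.sum_le_sum (fun x _ =>
              mul_le_mul_of_nonneg_left (hcond' x) (hw0' x))
        _ = (s : ℝ) := by rw [← Finset.sum_mul, hw1', one_mul]
    have core2 : Real.log (KW.schur N).det - Real.log (KW.schur M).det ≤ 0 := by
      have : (((M⁻¹ - fromBlocks 0 0 0 M.toBlocks₂₂⁻¹) * N)).trace ≤ (s:ℝ) := by
        rw [htr]; exact hbound
      calc Real.log (KW.schur N).det - Real.log (KW.schur M).det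
          ≤ (((M⁻¹ - fromBlocks 0 0 0 M.toBlocks₂₂⁻¹) * N)).trace
            - (Fintype.card (Fin s) : ℝ) := core
        _ ≤ 0 := by rw [hcard]; linarith
    show Real.log (KW.schur N).det ≤ Real.log (KW.schur M).det
    linarith
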